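/- Colimits in the category Mod(T) of models of a partial Horn theory T can be computed as colim_{j∈J}(M_j) ≅ Syn(colim_{j∈J}(Lang(M_j))), where the colimit on the right is taken in the category of theories under T. -/

import Mathlib

open CategoryTheory CategoryTheory.Limits

/-- Colimits in the category `Mod(T)` of models of a partial Horn theory
`T` can be computed as `colim_{j∈J} M_j ≅ Syn(colim_{j∈J} Lang(M_j))`, where the colimit on
the right is taken in the category `T/Th` of theories under `T`.  Abstractly: `Mod(T)` is a
category `C` equipped with the fully faithful functor `Lang : C ⥤ D` into the category `D`
of theories under `T` and its right adjoint `Syn : D ⥤ C`; then for any diagram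
`F : J ⥤ C`, the colimit of `F` is isomorphic to `Syn` applied to the colimit of
`F ⋙ Lang`. -/
theorem stmt3 {C : Type*} {D : Type*} {J : Type*}
    [Category C] [Category D] [Category J]
    (Lang : C ⥤ D) (Syn : D ⥤ C) (adj : Lang ⊣ Syn)
    [Lang.Full] [Lang.Faithful]
    (F : J ⥤ C) [HasColimit F] [HasColimit (F ⋙ Lang)] :
    Nonempty (colimit F ≅ Syn.obj (colimit (F ⋙ Lang))) := by
  haveI : PreservesColimitsOfSize.{_, _} Lang := adj.leftAdjoint_preservesColimits
  exact ⟨asIso (adj.unit.app (colimit F)) ≪≫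
    Syn.mapIso (preservesColimitIso Lang F)⟩
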